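/- If 0 < μτ < 1/e, then t ↦ dexp(-μt; -μτ) is monotonically non-increasing on [0, ∞), and more generally (-1)^m d^m/dt^m dexp(-μt; -μτ) = μ^m dexp(-μ(t - mτ); -μτ) ≥ 0 for all m ≥ 0 and t where the derivative exists. -/

import Mathlib

open Real Set

noncomputable def dexp (μ τ t : ℝ) : ℝ :=
  ∑' n : ℕ, (-μ) ^ n * (t - n * τ) ^ n / (Nat.factorial n) * (if (n : ℝ) * τ ≤ t then 1 else 0)

namespace DexpAux


/-- The polynomial to which `dexp` is locally equal. -/
noncomputable def P (μ τ : ℝ) (k : ℕ) (t : ℝ) : ℝ :=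
  ∑ n ∈ Finset.range (k + 1), (-μ) ^ n * (t - n * τ) ^ n / (Nat.factorial n)

lemma dexp_eq_sum {μ τ : ℝ} (hτ : 0 < τ) {k : ℕ} {t : ℝ} (ht : t < ((k : ℝ) + 1) * τ) :
    dexp μ τ t = ∑ n ∈ Finset.range (k + 1),
      (-μ) ^ n * (t - n * τ) ^ n / (Nat.factorial n) * (if (n : ℝ) * τ ≤ t then 1 else 0) := by
  apply tsum_eq_sum
  intro n hn
  rw [Finset.mem_range, not_lt] at hn
  have h : ¬ ((n : ℝ) * τ ≤ t) := by
    push_neg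
    calc t < ((k : ℝ) + 1) * τ := ht
      _ ≤ (n : ℝ) * τ := by
        apply mul_le_mul_of_nonneg_right _ hτ.le
        exact_mod_cast hn
  rw [if_neg h, mul_zero]

lemma dexp_neg {μ τ : ℝ} (hτ : 0 < τ) {t : ℝ} (ht : t < 0) : dexp μ τ t = 0 := by
  rw [dexp_eq_sum (k := 0) hτ (by push_cast; linarith)]
  simp [ht.not_ge]

lemma dexp_eq_P {μ τ : ℝ} (hτ : 0 < τ) {k : ℕ} {t : ℝ} (h1 : (k : ℝ) * τ ≤ t)
    (h2 : t ≤ ((k : ℝ) + 1) * τ) : dexp μ τ t = P μ τ k t := by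
  rw [dexp_eq_sum (k := k + 1) hτ (by push_cast; nlinarith)]
  rw [Finset.sum_range_succ]
  have hlast : (-μ) ^ (k + 1) * (t - (k + 1 : ℕ) * τ) ^ (k + 1) / (Nat.factorial (k + 1)) *
      (if ((k + 1 : ℕ) : ℝ) * τ ≤ t then 1 else 0) = 0 := by
    rcases lt_or_eq_of_le h2 with h | h
    · rw [if_neg (by push_cast; push_neg; linarith), mul_zero]
    · have : t - ((k + 1 : ℕ) : ℝ) * τ = 0 := by push_cast; linarith
      rw [this, zero_pow (Nat.succ_ne_zero k), mul_zero, zero_div, zero_mul]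
  rw [hlast, add_zero]
  unfold P
  apply Finset.sum_congr rfl
  intro n hn
  rw [Finset.mem_range] at hn
  have : ((n : ℝ)) * τ ≤ t := by
    calc (n : ℝ) * τ ≤ (k : ℝ) * τ := by
          apply mul_le_mul_of_nonneg_right _ hτ.le
          exact_mod_cast Nat.lt_succ_iff.mp hn
      _ ≤ t := h1
  rw [if_pos this, mul_one]

lemma P_zero (μ τ t : ℝ) : P μ τ 0 t = 1 := by simp [P]

lemma dexp_zero_le {μ τ : ℝ} (hτ : 0 < τ) {t : ℝ} (h1 : 0 ≤ t) (h2 : t ≤ τ) :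
    dexp μ τ t = 1 := by
  rw [dexp_eq_P (k := 0) hτ (by simpa using h1) (by simpa using h2), P_zero]


lemma continuous_P (μ τ : ℝ) (k : ℕ) : Continuous (P μ τ k) := by
  unfold P; fun_prop

lemma hasDerivAt_P (μ τ : ℝ) (k : ℕ) (t : ℝ) :
    HasDerivAt (P μ τ (k + 1)) (-μ * P μ τ k (t - τ)) t := by
  have h : ∀ n ∈ Finset.range (k + 2),
      HasDerivAt (fun s => (-μ) ^ n * (s - n * τ) ^ n / (Nat.factorial n))
        ((-μ) ^ n * ((n : ℝ) * (t - n * τ) ^ (n - 1)) / (Nat.factorial n)) t := by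
    intro n _
    have h1 : HasDerivAt (fun s : ℝ => (s - (n : ℝ) * τ) ^ n)
        ((n : ℝ) * (t - (n : ℝ) * τ) ^ (n - 1)) t :=
      HasDerivAt.comp_sub_const t ((n : ℝ) * τ) (hasDerivAt_pow n (t - (n : ℝ) * τ))
    exact (h1.const_mul ((-μ) ^ n)).div_const _
  have hsum := HasDerivAt.fun_sum h
  have : P μ τ (k + 1) = fun s => ∑ n ∈ Finset.range (k + 2),
      (-μ) ^ n * (s - n * τ) ^ n / (Nat.factorial n) := by
    funext s; rfl
  rw [this]
  convert hsum using 1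
  · rfl
  · rfl
  rw [Finset.sum_range_succ']
  simp only [Nat.cast_zero, pow_zero, zero_mul, mul_zero, Nat.factorial_zero, Nat.cast_one,
    zero_div, one_mul, add_zero]
  unfold P
  rw [Finset.mul_sum]
  apply Finset.sum_congr rfl
  intro j _
  have hfac : ((Nat.factorial (j + 1) : ℝ)) = ((j : ℝ) + 1) * (Nat.factorial j : ℝ) := by
    rw [Nat.factorial_succ]; push_cast; ring
  have hpt : (t - ((j : ℝ) + 1) * τ) = (t - τ - (j : ℝ) * τ) := by ring
  have h1 : ((j : ℕ) + 1 : ℕ) - 1 = j := by omega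
  push_cast
  rw [hpt, hfac, pow_succ]
  have hj : ((j : ℝ) + 1) ≠ 0 := by positivity
  have hf : ((Nat.factorial j : ℝ)) ≠ 0 := by positivity
  field_simp


section
variable {μ τ a : ℝ}


/-- between grid points -/
lemma exists_interval (hτ : 0 < τ) {t : ℝ} (htpos : 0 < t) (h : ∀ n : ℕ, t ≠ (n : ℝ) * τ) :
    ∃ k : ℕ, (k : ℝ) * τ < t ∧ t < ((k : ℝ) + 1) * τ := by
  refine ⟨⌊t / τ⌋₊, ?_, ?_⟩
  · rcases (Nat.floor_le (by positivity : (0:ℝ) ≤ t / τ)).lt_or_eq with hlt | heq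
    · exact (lt_div_iff₀ hτ).mp hlt
    · exact absurd (by rw [heq]; field_simp) (h ⌊t / τ⌋₊)
  · have := Nat.lt_floor_add_one (t / τ)
    calc t = t / τ * τ := by field_simp
      _ < ((⌊t / τ⌋₊ : ℝ) + 1) * τ := by
        apply mul_lt_mul_of_pos_right this hτ

lemma offgrid_mem_interval (hτ : 0 < τ) {k n : ℕ} {u : ℝ} (h1 : (k : ℝ) * τ < u)
    (h2 : u < ((k : ℝ) + 1) * τ) : u ≠ (n : ℝ) * τ := by
  intro he
  subst he
  have l1 : (k : ℝ) < n := by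
    have := (mul_lt_mul_iff_left₀ hτ).mp h1; exact_mod_cast this
  have l2 : (n : ℝ) < (k : ℝ) + 1 := by
    have := (mul_lt_mul_iff_left₀ hτ).mp h2; exact_mod_cast this
  have : (k : ℕ) < n := by exact_mod_cast l1
  have : (n : ℕ) < k + 1 := by exact_mod_cast l2
  omega

lemma offgrid_eventually (hτ : 0 < τ) {t : ℝ} (h : ∀ n : ℕ, t ≠ (n : ℝ) * τ) :
    ∀ᶠ u in nhds t, ∀ n : ℕ, u ≠ (n : ℝ) * τ := by
  rcases lt_trichotomy t 0 with htneg | htz | htpos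
  · filter_upwards [Iio_mem_nhds htneg] with u hu n
    intro he
    have : (0:ℝ) ≤ (n : ℝ) * τ := by positivity
    rw [he] at hu; exact absurd hu (not_lt.mpr this)
  · exact absurd (by rw [htz]; simp : t = ((0:ℕ):ℝ) * τ) (h 0)
  · obtain ⟨k, hk1, hk2⟩ := exists_interval hτ htpos h
    filter_upwards [Ioo_mem_nhds hk1 hk2] with u hu n
    exact offgrid_mem_interval hτ hu.1 hu.2

lemma hasDerivAt_dexp (hτ : 0 < τ) {t : ℝ} (h : ∀ n : ℕ, t ≠ (n : ℝ) * τ) :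
    HasDerivAt (dexp μ τ) (-μ * dexp μ τ (t - τ)) t := by
  rcases lt_trichotomy t 0 with htneg | htz | htpos
  · have hd : HasDerivAt (dexp μ τ) 0 t := by
      apply HasDerivAt.congr_of_eventuallyEq (hasDerivAt_const t (0:ℝ))
      · filter_upwards [Iio_mem_nhds htneg] with u hu
        exact dexp_neg hτ hu
    have : dexp μ τ (t - τ) = 0 := dexp_neg hτ (by linarith)
    rw [this, mul_zero]
    exact hd
  · exact absurd (by rw [htz]; simp : t = ((0:ℕ):ℝ) * τ) (h 0)
  · obtain ⟨k, hk1, hk2⟩ := exists_interval hτ htpos h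
    have heq : ∀ u ∈ Ioo ((k : ℝ) * τ) (((k : ℝ) + 1) * τ), dexp μ τ u = P μ τ k u :=
      fun u hu => dexp_eq_P hτ hu.1.le hu.2.le
    have hmem : Ioo ((k : ℝ) * τ) (((k : ℝ) + 1) * τ) ∈ nhds t := Ioo_mem_nhds hk1 hk2
    cases k with
    | zero =>
      have hd : HasDerivAt (dexp μ τ) 0 t := by
        apply HasDerivAt.congr_of_eventuallyEq (hasDerivAt_const t (1:ℝ))
        · filter_upwards [hmem] with u hu
          rw [heq u hu, P_zero]
      have : dexp μ τ (t - τ) = 0 := by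
        apply dexp_neg hτ
        simp only [Nat.cast_zero, zero_add, one_mul] at hk2
        linarith
      rw [this, mul_zero]
      exact hd
    | succ j =>
      have hd : HasDerivAt (dexp μ τ) (-μ * P μ τ j (t - τ)) t := by
        apply HasDerivAt.congr_of_eventuallyEq (hasDerivAt_P μ τ j t)
        · filter_upwards [hmem] with u hu; exact heq u hu
      have hpe : dexp μ τ (t - τ) = P μ τ j (t - τ) := by
        apply dexp_eq_P hτ
        · push_cast at hk1 ⊢; linarith
        · push_cast at hk2 ⊢; linarith
      rw [hpe]
      exact hd



lemma iteratedDeriv_dexp (hτ : 0 < τ) (m : ℕ) :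
    ∀ t : ℝ, (∀ n : ℕ, t ≠ (n : ℝ) * τ) →
      iteratedDeriv m (dexp μ τ) t = (-μ) ^ m * dexp μ τ (t - m * τ) := by
  induction m with
  | zero => intro t _; simp [iteratedDeriv_zero]
  | succ m ih =>
    intro t ht
    rw [iteratedDeriv_succ]
    have hev : iteratedDeriv m (dexp μ τ) =ᶠ[nhds t]
        fun u => (-μ) ^ m * dexp μ τ (u - m * τ) :=
      (offgrid_eventually hτ ht).mono (fun u hu => ih u hu)
    rw [hev.deriv_eq]
    have h2 : ∀ n : ℕ, t - (m : ℝ) * τ ≠ (n : ℝ) * τ := by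
      intro n hn
      apply ht (n + m)
      push_cast
      linarith [sub_eq_iff_eq_add.mp hn]
    have hd : HasDerivAt (fun u => (-μ) ^ m * dexp μ τ (u - (m : ℝ) * τ))
        ((-μ) ^ m * (-μ * dexp μ τ (t - (m : ℝ) * τ - τ))) t := by
      exact (HasDerivAt.comp_sub_const t ((m : ℝ) * τ) (hasDerivAt_dexp hτ h2)).const_mul _
    rw [hd.deriv]
    have : t - (m : ℝ) * τ - τ = t - ((m : ℕ) + 1 : ℝ) * τ := by ring
    rw [this, pow_succ]
    push_cast
    ring




lemma continuousOn_dexp_Icc (hτ : 0 < τ) (k : ℕ) :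
    ContinuousOn (dexp μ τ) (Icc ((k : ℝ) * τ) (((k : ℝ) + 1) * τ)) :=
  (continuous_P μ τ k).continuousOn.congr fun u hu => dexp_eq_P hτ hu.1 hu.2

lemma exists_a (hμ : 0 < μ) (hτ : 0 < τ) (hμτ : μ * τ < (Real.exp 1)⁻¹) :
    ∃ a : ℝ, 0 < a ∧ μ * exp (a * τ) = a := by
  have h1 : ContinuousOn (fun s : ℝ => s * exp (-(s * τ))) (Icc 0 τ⁻¹) := by fun_prop
  have h2 : (0 : ℝ) ≤ τ⁻¹ := by positivity
  have hmem : μ ∈ Icc ((fun s : ℝ => s * exp (-(s * τ))) 0)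
      ((fun s : ℝ => s * exp (-(s * τ))) τ⁻¹) := by
    constructor
    · simp [hμ.le]
    · simp only
      rw [show τ⁻¹ * τ = 1 by field_simp, exp_neg]
      calc μ = μ * τ * τ⁻¹ := by field_simp
        _ ≤ (exp 1)⁻¹ * τ⁻¹ := mul_le_mul_of_nonneg_right hμτ.le h2
        _ = τ⁻¹ * (exp 1)⁻¹ := by ring
  obtain ⟨x, hx, hfx⟩ := intermediate_value_Icc h2 h1 hmem
  refine ⟨x, ?_, ?_⟩
  · rcases hx.1.lt_or_eq with h | h
    · exact h
    · exfalso
      rw [← h] at hfx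
      simp only [zero_mul, neg_zero, exp_zero, mul_one] at hfx
      exact hμ.ne' hfx.symm
  · simp only at hfx
    have h3 : μ * exp (x * τ) = x * exp (-(x * τ)) * exp (x * τ) := by rw [hfx]
    rwa [mul_assoc, ← exp_add, neg_add_cancel, exp_zero, mul_one] at h3

lemma u_mono (hμ : 0 < μ) (hτ : 0 < τ) (ha : 0 < a) (hae : μ * exp (a * τ) = a) :
    ∀ k : ℕ, StrictMonoOn (fun t => exp (a * t) * dexp μ τ t) (Icc 0 (((k : ℝ) + 1) * τ)) := by
  intro k
  induction k with
  | zero =>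
    intro s hs t ht hst
    simp only [Nat.cast_zero, zero_add, one_mul] at hs ht
    simp only [dexp_zero_le hτ hs.1 hs.2, dexp_zero_le hτ ht.1 ht.2, mul_one]
    exact exp_lt_exp.mpr (mul_lt_mul_of_pos_left hst ha)
  | succ k hk =>
    set K : ℝ := ((k : ℝ) + 1) * τ with hK
    have hKτ : τ ≤ K := by nlinarith [Nat.cast_nonneg (α := ℝ) k]
    have hKpos : 0 < K := lt_of_lt_of_le hτ hKτ
    have hrng : (((k + 1 : ℕ) : ℝ) + 1) * τ = K + τ := by push_cast; ring
    rw [hrng]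
    -- continuity of dexp on [K, K+τ]
    have hc : ContinuousOn (dexp μ τ) (Icc K (K + τ)) := by
      have h := continuousOn_dexp_Icc (μ := μ) hτ (k + 1)
      have e1 : (((k + 1 : ℕ)) : ℝ) * τ = K := by push_cast; ring
      have e2 : ((((k + 1 : ℕ)) : ℝ) + 1) * τ = K + τ := by push_cast; ring
      rwa [e1, e2] at h
    -- off-grid points in the open interval
    have hog : ∀ t ∈ Ioo K (K + τ), ∀ n : ℕ, t ≠ (n : ℝ) * τ := by
      intro t htt n
      apply offgrid_mem_interval (k := k + 1) hτ
      · push_cast; linarith [htt.1]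
      · push_cast; linarith [htt.2]
    set c : ℝ := exp (a * K) * dexp μ τ K with hcdef
    -- Step (a): u K ≤ u t on [K, K+τ]
    have hlow : ∀ t ∈ Icc K (K + τ), c ≤ exp (a * t) * dexp μ τ t := by
      set w : ℝ → ℝ := fun t => dexp μ τ t - c * exp (-(a * t)) with hwdef
      have hw0 : w K = 0 := by
        simp only [hwdef, hcdef]
        rw [show exp (a * K) * dexp μ τ K * exp (-(a * K))
            = dexp μ τ K * (exp (a * K) * exp (-(a * K))) from by ring, ← exp_add,
          add_neg_cancel, exp_zero, mul_one, sub_self]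
      have hwd : ∀ t ∈ Ioo K (K + τ), HasDerivAt w
          (-μ * dexp μ τ (t - τ) - c * (exp (-(a * t)) * -a)) t := by
        intro t htt
        have hd1 : HasDerivAt (dexp μ τ) (-μ * dexp μ τ (t - τ)) t :=
          hasDerivAt_dexp hτ (hog t htt)
        have hlin : HasDerivAt (fun s : ℝ => -(a * s)) (-a) t := by
          simpa using (hasDerivAt_id t).const_mul (-a)
        have hd2 : HasDerivAt (fun s : ℝ => exp (-(a * s))) (exp (-(a * t)) * -a) t :=
          hlin.exp
        exact hd1.sub (hd2.const_mul c)
      have hwmono : MonotoneOn w (Icc K (K + τ)) := by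
        apply monotoneOn_of_deriv_nonneg (convex_Icc _ _)
        · apply hc.sub
          exact (Continuous.continuousOn (by fun_prop))
        · intro x hx
          rw [interior_Icc] at hx
          exact ((hwd x hx).differentiableAt).differentiableWithinAt
        · intro x hx
          rw [interior_Icc] at hx
          rw [(hwd x hx).deriv]
          -- key inequality
          have hx0 : 0 ≤ x - τ := by linarith [hx.1]
          have hxK : x - τ ≤ K := by linarith [hx.2]
          have e1 : exp (a * (x - τ)) * dexp μ τ (x - τ) ≤ c := by
            have := (hk.monotoneOn) ⟨hx0, hxK⟩ ⟨hKpos.le, le_refl K⟩ hxK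
            simpa [hcdef] using this
          have e2 : dexp μ τ (x - τ) ≤ exp (-(a * (x - τ))) * c := by
            have h1 := mul_le_mul_of_nonneg_left e1 (exp_pos (-(a * (x - τ)))).le
            rwa [← mul_assoc, ← exp_add, neg_add_cancel, exp_zero, one_mul] at h1
          have h2 : μ * exp (-(a * (x - τ))) = a * exp (-(a * x)) := by
            rw [show -(a * (x - τ)) = a * τ + -(a * x) from by ring, exp_add, ← mul_assoc, hae]
          have h3 : μ * dexp μ τ (x - τ) ≤ a * exp (-(a * x)) * c := by
            calc μ * dexp μ τ (x - τ) ≤ μ * (exp (-(a * (x - τ))) * c) := by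
                  exact mul_le_mul_of_nonneg_left e2 hμ.le
              _ = μ * exp (-(a * (x - τ))) * c := by ring
              _ = a * exp (-(a * x)) * c := by rw [h2]
          nlinarith [h3]
      intro t htt
      have := hwmono (left_mem_Icc.mpr (by linarith)) htt htt.1
      rw [hw0] at this
      simp only [hwdef] at this
      -- 0 ≤ dexp t - c exp(-(a t))  ⇒  c ≤ exp (a t) * dexp t
      have h4 := mul_le_mul_of_nonneg_left (by linarith : c * exp (-(a * t)) ≤ dexp μ τ t)
        (exp_pos (a * t)).le
      rwa [show exp (a * t) * (c * exp (-(a * t))) = c * (exp (a * t) * exp (-(a * t)))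
        from by ring, ← exp_add, add_neg_cancel, exp_zero, mul_one] at h4
    -- Step (b): strict monotonicity on [K, K+τ]
    have hsm2 : StrictMonoOn (fun t => exp (a * t) * dexp μ τ t) (Icc K (K + τ)) := by
      apply strictMonoOn_of_deriv_pos (convex_Icc _ _)
      · exact (Continuous.continuousOn (by fun_prop)).mul hc
      · intro x hx
        rw [interior_Icc] at hx
        have hexp : HasDerivAt (fun s : ℝ => exp (a * s)) (exp (a * x) * a) x :=
          (Real.hasDerivAt_exp (a * x)).comp x (by simpa using (hasDerivAt_id x).const_mul a)
        have hud : HasDerivAt (fun s => exp (a * s) * dexp μ τ s)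
            (exp (a * x) * a * dexp μ τ x + exp (a * x) * (-μ * dexp μ τ (x - τ))) x :=
          hexp.mul (hasDerivAt_dexp hτ (hog x hx))
        rw [hud.deriv]
        have hx0 : 0 ≤ x - τ := by linarith [hx.1]
        have hxK : x - τ < K := by linarith [hx.2]
        have hA : a * c ≤ a * (exp (a * x) * dexp μ τ x) :=
          mul_le_mul_of_nonneg_left (hlow x ⟨hx.1.le, hx.2.le⟩) ha.le
        have hB : exp (a * x) * (μ * dexp μ τ (x - τ))
            = a * (exp (a * (x - τ)) * dexp μ τ (x - τ)) := by
          calc exp (a * x) * (μ * dexp μ τ (x - τ))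
              = (μ * exp (a * τ)) * (exp (a * (x - τ)) * dexp μ τ (x - τ)) := by
                rw [show a * x = a * τ + a * (x - τ) from by ring, exp_add]; ring
            _ = a * (exp (a * (x - τ)) * dexp μ τ (x - τ)) := by rw [hae]
        have hC : exp (a * (x - τ)) * dexp μ τ (x - τ) < c := by
          have := hk ⟨hx0, hxK.le⟩ ⟨hKpos.le, le_refl K⟩ hxK
          simpa [hcdef] using this
        have hC' := mul_lt_mul_of_pos_left hC ha
        nlinarith [hA, hB, hC']
    -- Step (c): glue
    intro s hs t ht hst
    rcases le_or_gt t K with h1 | h1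
    · exact hk ⟨hs.1, hst.le.trans h1⟩ ⟨ht.1, h1⟩ hst
    · rcases le_or_gt s K with h2 | h2
      · have e1 : exp (a * s) * dexp μ τ s ≤ exp (a * K) * dexp μ τ K :=
          hk.monotoneOn ⟨hs.1, h2⟩ ⟨hKpos.le, le_refl K⟩ h2
        have e2 : exp (a * K) * dexp μ τ K < exp (a * t) * dexp μ τ t :=
          hsm2 ⟨le_refl K, by linarith⟩ ⟨h1.le, ht.2⟩ h1
        exact lt_of_le_of_lt e1 e2
      · exact hsm2 ⟨h2.le, hst.le.trans ht.2⟩ ⟨h1.le, ht.2⟩ hst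



lemma le_succ_mul (hτ : 0 < τ) {t : ℝ} {k : ℕ} (hk : t / τ ≤ (k : ℝ)) :
    t ≤ ((k : ℝ) + 1) * τ := by
  have h1 : t / τ * τ ≤ (k : ℝ) * τ := mul_le_mul_of_nonneg_right hk hτ.le
  rw [div_mul_cancel₀ _ hτ.ne'] at h1
  nlinarith

lemma dexp_pos (hμ : 0 < μ) (hτ : 0 < τ) (hμτ : μ * τ < (Real.exp 1)⁻¹) {t : ℝ}
    (h : 0 ≤ t) : 0 < dexp μ τ t := by
  obtain ⟨a, ha, hae⟩ := exists_a hμ hτ hμτ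
  obtain ⟨k, hk⟩ := exists_nat_ge (t / τ)
  have htk : t ≤ ((k : ℝ) + 1) * τ := le_succ_mul hτ hk
  have h0 : (0 : ℝ) ∈ Icc 0 (((k : ℝ) + 1) * τ) := ⟨le_refl 0, by positivity⟩
  have hmono := (u_mono hμ hτ ha hae k).monotoneOn h0 ⟨h, htk⟩ h
  rw [dexp_zero_le hτ le_rfl hτ.le, mul_zero, exp_zero, one_mul] at hmono
  nlinarith [exp_pos (a * t), hmono]

lemma dexp_nonneg (hμ : 0 < μ) (hτ : 0 < τ) (hμτ : μ * τ < (Real.exp 1)⁻¹) (t : ℝ) :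
    0 ≤ dexp μ τ t := by
  rcases lt_or_ge t 0 with h | h
  · rw [dexp_neg hτ h]
  · exact (dexp_pos hμ hτ hμτ h).le

lemma anti_aux (hμ : 0 < μ) (hτ : 0 < τ) (hμτ : μ * τ < (Real.exp 1)⁻¹) :
    ∀ k : ℕ, AntitoneOn (dexp μ τ) (Icc 0 (((k : ℝ) + 1) * τ)) := by
  intro k
  induction k with
  | zero =>
    intro s hs t ht hst
    simp only [Nat.cast_zero, zero_add, one_mul] at hs ht
    rw [dexp_zero_le hτ hs.1 hs.2, dexp_zero_le hτ ht.1 ht.2]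
  | succ k hk =>
    set K : ℝ := ((k : ℝ) + 1) * τ with hKdef
    have hKτ : τ ≤ K := by nlinarith [Nat.cast_nonneg (α := ℝ) k]
    have hKpos : 0 < K := lt_of_lt_of_le hτ hKτ
    have hrng : (((k + 1 : ℕ) : ℝ) + 1) * τ = K + τ := by push_cast; ring
    rw [hrng]
    have hc : ContinuousOn (dexp μ τ) (Icc K (K + τ)) := by
      have h := continuousOn_dexp_Icc (μ := μ) hτ (k + 1)
      have e1 : (((k + 1 : ℕ)) : ℝ) * τ = K := by push_cast; ring
      have e2 : ((((k + 1 : ℕ)) : ℝ) + 1) * τ = K + τ := by push_cast; ring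
      rwa [e1, e2] at h
    have hog : ∀ t ∈ Ioo K (K + τ), ∀ n : ℕ, t ≠ (n : ℝ) * τ := by
      intro t htt n
      apply offgrid_mem_interval (k := k + 1) hτ
      · push_cast; linarith [htt.1]
      · push_cast; linarith [htt.2]
    have piece : AntitoneOn (dexp μ τ) (Icc K (K + τ)) := by
      apply antitoneOn_of_deriv_nonpos (convex_Icc _ _) hc
      · intro x hx
        rw [interior_Icc] at hx
        exact ((hasDerivAt_dexp hτ (hog x hx)).differentiableAt).differentiableWithinAt
      · intro x hx
        rw [interior_Icc] at hx
        rw [(hasDerivAt_dexp hτ (hog x hx)).deriv]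
        have : 0 ≤ dexp μ τ (x - τ) := dexp_nonneg hμ hτ hμτ _
        nlinarith
    intro s hs t ht hst
    rcases le_or_gt t K with h1 | h1
    · exact hk ⟨hs.1, hst.trans h1⟩ ⟨ht.1, h1⟩ hst
    · rcases le_or_gt s K with h2 | h2
      · have e1 : dexp μ τ K ≤ dexp μ τ s := hk ⟨hs.1, h2⟩ ⟨hKpos.le, le_refl K⟩ h2
        have e2 : dexp μ τ t ≤ dexp μ τ K := piece ⟨le_refl K, by linarith⟩ ⟨h1.le, ht.2⟩ h1.le
        linarith
      · exact piece ⟨h2.le, hst.trans ht.2⟩ ⟨h1.le, ht.2⟩ hst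


end

end DexpAux

open DexpAux in
/-- If `0 < μτ < 1/e`, then `dexp(-μ·; -μτ)` is monotonically non-increasing on `[0, ∞)`,
and `(-1)^m dᵐ/dtᵐ dexp(-μt; -μτ) = μ^m dexp(-μ(t - mτ); -μτ) ≥ 0` at every point `t`
where the derivatives exist (i.e. away from the integer multiples of `τ`). -/
theorem dexp_antitone_and_completely_monotone (μ τ : ℝ) (hμ : 0 < μ) (hτ : 0 < τ)
    (hμτ : μ * τ < (Real.exp 1)⁻¹) :
    AntitoneOn (fun t => dexp μ τ t) (Ici 0) ∧
    (∀ (m : ℕ) (t : ℝ), (∀ n : ℕ, t ≠ n * τ) →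
      (-1 : ℝ) ^ m * iteratedDeriv m (fun t => dexp μ τ t) t
          = μ ^ m * dexp μ τ (t - m * τ) ∧
      0 ≤ (-1 : ℝ) ^ m * iteratedDeriv m (fun t => dexp μ τ t) t) := by
  constructor
  · intro s hs t ht hst
    obtain ⟨k, hk⟩ := exists_nat_ge (t / τ)
    have htk : t ≤ ((k : ℝ) + 1) * τ := le_succ_mul hτ hk
    exact anti_aux hμ hτ hμτ k ⟨hs, hst.trans htk⟩ ⟨ht, htk⟩ hst
  · intro m t ht
    have heq : (fun t => dexp μ τ t) = dexp μ τ := rfl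
    rw [heq]
    have hit := iteratedDeriv_dexp (μ := μ) hτ m t ht
    have hkey : (-1 : ℝ) ^ m * iteratedDeriv m (dexp μ τ) t = μ ^ m * dexp μ τ (t - m * τ) := by
      rw [hit, ← mul_assoc, ← mul_pow, neg_one_mul, neg_neg]
    refine ⟨hkey, ?_⟩
    rw [hkey]
    exact mul_nonneg (pow_nonneg hμ.le m) (dexp_nonneg hμ hτ hμτ _)
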